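/- Let β* = 0 if h_i − h_j ≤ 2L for all indices i, j, and otherwise let β* be the maximum of (h_i − h_j − 2L)/|t_i − t_j| over all pairs with h_i − h_j > 2L. Then every feasible β*-path has arclength (t_n − t_0)·√(1 + (β*)²), and for every β ≥ 0, every feasible β-path has arclength at least (t_n − t_0)·√(1 + (β*)²). Hence any feasible β*-path minimizes the length among all feasible paths traversing the corridor. -/
import Mathlib


/-- `PWLinSlope β a b g` : `g` is continuous piecewise-linear on `[a, b]`,
affine with slope `β` or `-β` on each interval of some finite partition of `[a, b]`. -/
def PWLinSlope (β a b : ℝ) (g : ℝ → ℝ) : Prop :=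
  ∃ m : ℕ, ∃ s : ℕ → ℝ, s 0 = a ∧ s m = b ∧ (∀ k < m, s k < s (k + 1)) ∧
    ∀ k < m, ∃ σ : ℝ, (σ = β ∨ σ = -β) ∧
      ∀ x ∈ Set.Icc (s k) (s (k + 1)), g x = g (s k) + σ * (x - s k)

/-- `Feasible a b L f β g` : `g` is a feasible `β`-path over `[a, b]` for the corridor of
half-width `L` around the α-path `f`. -/
def Feasible (a b L : ℝ) (f : ℝ → ℝ) (β : ℝ) (g : ℝ → ℝ) : Prop :=
  PWLinSlope β a b g ∧ ∀ x ∈ Set.Icc a b, |g x - f x| ≤ L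

private lemma mono_aux {m : ℕ} {u : ℕ → ℝ} (hu : ∀ k < m, u k < u (k + 1)) :
    ∀ i j, i ≤ j → j ≤ m → u i ≤ u j := by
  intro i j hij
  induction j, hij using Nat.le_induction with
  | base => intro _; exact le_rfl
  | succ j' hij' ih =>
    intro hjm
    exact le_trans (ih (by omega)) (le_of_lt (hu j' (by omega)))

private lemma smono_aux {m : ℕ} {u : ℕ → ℝ} (hu : ∀ k < m, u k < u (k + 1)) :
    ∀ i j, i < j → j ≤ m → u i < u j := by
  intro i j hij hjm
  exact lt_of_lt_of_le (hu i (by omega)) (mono_aux hu (i + 1) j (by omega) hjm)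

private lemma slope_mem {β a b : ℝ} {g : ℝ → ℝ} (hg : PWLinSlope β a b g)
    {p q c σ : ℝ} (hpq : p < q) (hap : a ≤ p) (hqb : q ≤ b)
    (haff : ∀ x ∈ Set.Icc p q, g x = c + σ * x) :
    σ = β ∨ σ = -β := by
  classical
  obtain ⟨m, u, hu0, hum, hinc, hseg⟩ := hg
  have h0 : u 0 ≤ p := by rw [hu0]; exact hap
  set j := Nat.findGreatest (fun j => u j ≤ p) m with hj
  have hjm : j ≤ m := Nat.findGreatest_le m
  have hujp : u j ≤ p := Nat.findGreatest_spec (P := fun k => u k ≤ p) (Nat.zero_le m) h0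
  have hjltm : j < m := by
    rcases lt_or_eq_of_le hjm with hlt | heq
    · exact hlt
    · exfalso
      rw [heq, hum] at hujp
      linarith
  have hpu : p < u (j + 1) := by
    by_contra hcon
    push_neg at hcon
    have := Nat.le_findGreatest (P := fun j => u j ≤ p) (by omega : j + 1 ≤ m) hcon
    omega
  obtain ⟨σ', hσ', hform⟩ := hseg j hjltm
  set y := min q (u (j + 1)) with hy
  have hpy : p < y := lt_min hpq hpu
  have hyq : y ≤ q := min_le_left _ _
  have hyu : y ≤ u (j + 1) := min_le_right _ _
  have key1 : g y - g p = σ * (y - p) := by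
    rw [haff p ⟨le_rfl, hpq.le⟩, haff y ⟨hpy.le, hyq⟩]; ring
  have key2 : g y - g p = σ' * (y - p) := by
    rw [hform p ⟨hujp, hpu.le⟩, hform y ⟨hujp.trans hpy.le, hyu⟩]; ring
  have hσσ' : σ = σ' := by
    have heq : σ * (y - p) = σ' * (y - p) := key1 ▸ key2
    exact mul_right_cancel₀ (sub_ne_zero.2 hpy.ne') heq
  rw [hσσ']; exact hσ'

private lemma lips {β a b : ℝ} {g : ℝ → ℝ} (hβ : 0 ≤ β) (hg : PWLinSlope β a b g) :
    ∀ x ∈ Set.Icc a b, ∀ y ∈ Set.Icc a b, |g y - g x| ≤ β * |y - x| := by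
  obtain ⟨m, u, hu0, hum, hinc, hseg⟩ := hg
  have main : ∀ j ≤ m, ∀ x y, a ≤ x → x ≤ y → y ≤ u j → |g y - g x| ≤ β * (y - x) := by
    intro j
    induction j with
    | zero =>
      intro _ x y hax hxy hyu
      have hxeq : x = y := le_antisymm hxy (hyu.trans (hu0 ▸ hax))
      subst hxeq
      simp
    | succ j ih =>
      intro hjm x y hax hxy hyu
      obtain ⟨σ, hσ, hform⟩ := hseg j (by omega)
      have hσabs : |σ| = β := by
        rcases hσ with rfl | rfl
        · exact abs_of_nonneg hβ
        · rw [abs_neg]; exact abs_of_nonneg hβ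
      by_cases hyj : y ≤ u j
      · exact ih (by omega) x y hax hxy hyj
      · push_neg at hyj
        by_cases hxj : u j ≤ x
        · have hx : x ∈ Set.Icc (u j) (u (j + 1)) := ⟨hxj, hxy.trans hyu⟩
          have hy : y ∈ Set.Icc (u j) (u (j + 1)) := ⟨hyj.le, hyu⟩
          have hΔ : g y - g x = σ * (y - x) := by
            rw [hform x hx, hform y hy]; ring
          rw [hΔ, abs_mul, hσabs, abs_of_nonneg (sub_nonneg.2 hxy)]
        · push_neg at hxj
          have h1 : |g (u j) - g x| ≤ β * (u j - x) :=
            ih (by omega) x (u j) hax hxj.le le_rfl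
          have h2 : |g y - g (u j)| ≤ β * (y - u j) := by
            have hy : y ∈ Set.Icc (u j) (u (j + 1)) := ⟨hyj.le, hyu⟩
            have hΔ : g y - g (u j) = σ * (y - u j) := by
              rw [hform y hy]; ring
            rw [hΔ, abs_mul, hσabs, abs_of_nonneg (sub_nonneg.2 hyj.le)]
          calc |g y - g x| ≤ |g y - g (u j)| + |g (u j) - g x| := abs_sub_le _ _ _
            _ ≤ β * (y - u j) + β * (u j - x) := add_le_add h2 h1
            _ = β * (y - x) := by ring
  intro x hx y hy
  rcases le_total x y with hxy | hyx
  · rw [abs_of_nonneg (sub_nonneg.2 hxy)]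
    exact main m le_rfl x y hx.1 hxy (hum ▸ hy.2)
  · rw [abs_sub_comm (g y), abs_sub_comm y]
    rw [abs_of_nonneg (sub_nonneg.2 hyx)]
    exact main m le_rfl y x hy.1 hyx (hum ▸ hx.2)

/-- every feasible β*-path has arclength (t n - t 0)·√(1 + β*²), and every
feasible β-path (β ≥ 0) has arclength at least that; arclength is computed as the sum of
segment lengths over any partition of [t 0, t n] into intervals on which the path is
affine. -/
theorem stmt_11
    (n : ℕ) (hn : 1 ≤ n) (t h : ℕ → ℝ) (α L : ℝ) (f : ℝ → ℝ)
    (hα : 0 < α) (hL : 0 < L)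
    (ht : ∀ i < n, t i < t (i + 1))
    (hslope : ∀ i < n,
      h (i + 1) - h i = α * (t (i + 1) - t i) ∨ h (i + 1) - h i = -α * (t (i + 1) - t i))
    (halt : ∀ i, i + 1 < n → (h (i + 2) - h (i + 1)) * (h (i + 1) - h i) < 0)
    (hf : ∀ i < n, ∀ x ∈ Set.Icc (t i) (t (i + 1)),
      f x = h i + (x - t i) * ((h (i + 1) - h i) / (t (i + 1) - t i)))
    (βstar : ℝ)
    (hβ0 : (∀ i ≤ n, ∀ j ≤ n, h i - h j ≤ 2 * L) → βstar = 0)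
    (hβmax : (∃ i ≤ n, ∃ j ≤ n, h i - h j > 2 * L) →
      IsGreatest {s : ℝ | ∃ i ≤ n, ∃ j ≤ n,
        h i - h j > 2 * L ∧ s = (h i - h j - 2 * L) / |t i - t j|} βstar) :
    (∀ g : ℝ → ℝ, Feasible (t 0) (t n) L f βstar g →
      ∀ (m : ℕ) (s : ℕ → ℝ), s 0 = t 0 → s m = t n → (∀ k < m, s k < s (k + 1)) →
        (∀ k < m, ∃ c σ : ℝ, ∀ x ∈ Set.Icc (s k) (s (k + 1)), g x = c + σ * x) →
        ∑ k ∈ Finset.range m,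
            Real.sqrt ((s (k + 1) - s k) ^ 2 + (g (s (k + 1)) - g (s k)) ^ 2)
          = (t n - t 0) * Real.sqrt (1 + βstar ^ 2)) ∧
    (∀ β : ℝ, 0 ≤ β → ∀ g : ℝ → ℝ, Feasible (t 0) (t n) L f β g →
      ∀ (m : ℕ) (s : ℕ → ℝ), s 0 = t 0 → s m = t n → (∀ k < m, s k < s (k + 1)) →
        (∀ k < m, ∃ c σ : ℝ, ∀ x ∈ Set.Icc (s k) (s (k + 1)), g x = c + σ * x) →
        (t n - t 0) * Real.sqrt (1 + βstar ^ 2) ≤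
          ∑ k ∈ Finset.range m,
            Real.sqrt ((s (k + 1) - s k) ^ 2 + (g (s (k + 1)) - g (s k)) ^ 2)) := by
  have tmono := mono_aux ht
  have tsmono := smono_aux ht
  -- f interpolates h at the knots
  have hft : ∀ i ≤ n, f (t i) = h i := by
    intro i hi
    rcases lt_or_eq_of_le hi with hlt | heq
    · have := hf i hlt (t i) ⟨le_rfl, (ht i hlt).le⟩
      simpa using this
    · subst heq
      obtain ⟨n', rfl⟩ : ∃ n', i = n' + 1 := ⟨i - 1, by omega⟩
      have hlt : n' < n' + 1 := by omega
      have hne : t (n' + 1) - t n' ≠ 0 := sub_ne_zero.2 (ht n' hlt).ne'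
      have h1 := hf n' hlt (t (n' + 1)) ⟨(ht n' hlt).le, le_rfl⟩
      rw [mul_comm, div_mul_cancel₀ _ hne] at h1
      linarith
  -- βstar is nonnegative
  have hβstar_nonneg : 0 ≤ βstar := by
    by_cases hc : ∀ i ≤ n, ∀ j ≤ n, h i - h j ≤ 2 * L
    · rw [hβ0 hc]
    · push_neg at hc
      obtain ⟨⟨i, hi, j, hj, hgt, heq⟩, -⟩ := hβmax hc
      rw [heq]
      exact div_nonneg (by linarith) (abs_nonneg _)
  -- feasibility forces β ≥ βstar
  have key : ∀ β : ℝ, 0 ≤ β → ∀ g : ℝ → ℝ, Feasible (t 0) (t n) L f β g → βstar ≤ β := by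
    rintro β hβ g ⟨hpwl, hcorr⟩
    by_cases hc : ∀ i ≤ n, ∀ j ≤ n, h i - h j ≤ 2 * L
    · rw [hβ0 hc]; exact hβ
    · push_neg at hc
      obtain ⟨⟨i, hi, j, hj, hgt, heq⟩, -⟩ := hβmax hc
      have hti : t i ∈ Set.Icc (t 0) (t n) :=
        ⟨tmono 0 i (Nat.zero_le _) hi, tmono i n hi le_rfl⟩
      have htj : t j ∈ Set.Icc (t 0) (t n) :=
        ⟨tmono 0 j (Nat.zero_le _) hj, tmono j n hj le_rfl⟩
      have hgi := hcorr (t i) hti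
      have hgj := hcorr (t j) htj
      rw [hft i hi] at hgi
      rw [hft j hj] at hgj
      have hgi' := abs_le.1 hgi
      have hgj' := abs_le.1 hgj
      have hlip := lips hβ hpwl (t j) htj (t i) hti
      have h3 : g (t i) - g (t j) ≤ β * |t i - t j| := le_trans (le_abs_self _) hlip
      have hij : i ≠ j := by rintro rfl; simp at hgt; linarith
      have htij : 0 < |t i - t j| := by
        rcases Nat.lt_or_ge i j with hlt | hge
        · exact abs_pos.2 (sub_ne_zero.2 (tsmono i j hlt hj).ne)
        · have : j < i := lt_of_le_of_ne hge (Ne.symm hij)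
          exact abs_pos.2 (sub_ne_zero.2 (tsmono j i this hi).ne')
      rw [heq, div_le_iff₀ htij]
      linarith
  -- arclength of any feasible β-path equals (t n - t 0) √(1 + β²)
  have sumEq : ∀ β : ℝ, 0 ≤ β → ∀ g : ℝ → ℝ, Feasible (t 0) (t n) L f β g →
      ∀ (m : ℕ) (s : ℕ → ℝ), s 0 = t 0 → s m = t n → (∀ k < m, s k < s (k + 1)) →
      (∀ k < m, ∃ c σ : ℝ, ∀ x ∈ Set.Icc (s k) (s (k + 1)), g x = c + σ * x) →
      ∑ k ∈ Finset.range m,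
          Real.sqrt ((s (k + 1) - s k) ^ 2 + (g (s (k + 1)) - g (s k)) ^ 2)
        = (t n - t 0) * Real.sqrt (1 + β ^ 2) := by
    rintro β hβ g ⟨hpwl, -⟩ m s hs0 hsm hsinc haff
    have smono := mono_aux hsinc
    have termEq : ∀ k < m, Real.sqrt ((s (k + 1) - s k) ^ 2 + (g (s (k + 1)) - g (s k)) ^ 2)
        = (s (k + 1) - s k) * Real.sqrt (1 + β ^ 2) := by
      intro k hk
      obtain ⟨c, σ, hcs⟩ := haff k hk
      have hap : t 0 ≤ s k := by rw [← hs0]; exact smono 0 k (Nat.zero_le _) hk.le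
      have hqb : s (k + 1) ≤ t n := by rw [← hsm]; exact smono (k + 1) m hk le_rfl
      have hσ : σ = β ∨ σ = -β := slope_mem hpwl (hsinc k hk) hap hqb hcs
      have hσ2 : σ ^ 2 = β ^ 2 := by rcases hσ with rfl | rfl <;> ring
      have hΔ : g (s (k + 1)) - g (s k) = σ * (s (k + 1) - s k) := by
        rw [hcs (s k) ⟨le_rfl, (hsinc k hk).le⟩, hcs (s (k + 1)) ⟨(hsinc k hk).le, le_rfl⟩]
        ring
      rw [hΔ]
      have h1 : (s (k + 1) - s k) ^ 2 + (σ * (s (k + 1) - s k)) ^ 2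
          = (s (k + 1) - s k) ^ 2 * (1 + β ^ 2) := by
        rw [mul_pow, ← hσ2]; ring
      rw [h1, Real.sqrt_mul (sq_nonneg _), Real.sqrt_sq (sub_nonneg.2 (hsinc k hk).le)]
    rw [Finset.sum_congr rfl (fun k hk => termEq k (Finset.mem_range.1 hk))]
    rw [← Finset.sum_mul, Finset.sum_range_sub s, hsm, hs0]
  constructor
  · intro g hg m s hs0 hsm hsinc haff
    exact sumEq βstar hβstar_nonneg g hg m s hs0 hsm hsinc haff
  · intro β hβ g hg m s hs0 hsm hsinc haff
    rw [sumEq β hβ g hg m s hs0 hsm hsinc haff]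
    have hββ : βstar ≤ β := key β hβ g hg
    have ht0n : t 0 ≤ t n := tmono 0 n (Nat.zero_le _) le_rfl
    have hsq : Real.sqrt (1 + βstar ^ 2) ≤ Real.sqrt (1 + β ^ 2) := by
      apply Real.sqrt_le_sqrt
      have : βstar ^ 2 ≤ β ^ 2 := pow_le_pow_left₀ hβstar_nonneg hββ 2
      linarith
    have h0 : 0 ≤ Real.sqrt (1 + βstar ^ 2) := Real.sqrt_nonneg _
    exact mul_le_mul_of_nonneg_left hsq (by linarith)
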